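/- Let R = ℤ[s, s⁻¹] and consider the free R-module with basis {u, v, w}. The quotient of R·u ⊕ R·v ⊕ R·w by the submodule generated by (1−s)u, (1−s)v, (1−s)(v−u), (1−s+s²)w, (1−s+s²)(w−u), and (1−s+s²)(w−v) is isomorphic to R/(R·(1−s+s²)); in particular its underlying additive group is free abelian of rank 2. -/

import Mathlib

open LaurentPolynomial

/-- `R = ℤ[s,s⁻¹]`. -/
noncomputable abbrev LZ : Type := LaurentPolynomial ℤ

/-- `s ∈ ℤ[s,s⁻¹]`. -/
noncomputable def sL : LZ := T 1

/-- Basis vector `u` of `R³`. -/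
noncomputable def uV : Fin 3 → LZ := Pi.single 0 1
/-- Basis vector `v` of `R³`. -/
noncomputable def vV : Fin 3 → LZ := Pi.single 1 1
/-- Basis vector `w` of `R³`. -/
noncomputable def wV : Fin 3 → LZ := Pi.single 2 1

/-- The submodule of `R³` generated by the six rows of the second differential for the
Artin group of type `D₄`. -/
noncomputable def imD4 : Submodule LZ (Fin 3 → LZ) :=
  Submodule.span LZ
    {(1 - sL) • uV, (1 - sL) • vV, (1 - sL) • (vV - uV), (1 - sL + sL ^ 2) • wV,
      (1 - sL + sL ^ 2) • (wV - uV), (1 - sL + sL ^ 2) • (wV - vV)}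

/-! ### Auxiliary material -/

section Aux

open Polynomial

set_option linter.unnecessarySimpa false

noncomputable def JD4 : Ideal LZ := Ideal.span {1 - sL + sL ^ 2}

noncomputable def phi3 : (Fin 3 → LZ) →ₗ[LZ] (LZ ⧸ JD4) :=
  JD4.mkQ.comp (LinearMap.proj 2)

lemma mem_ker_phi3 (x : Fin 3 → LZ) : x ∈ LinearMap.ker phi3 ↔ x 2 ∈ JD4 := by
  rw [LinearMap.mem_ker]
  show JD4.mkQ (x 2) = 0 ↔ _
  rw [Submodule.mkQ_apply, Submodule.Quotient.mk_eq_zero]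

lemma g1_mem : (1 - sL) • uV ∈ imD4 :=
  Submodule.subset_span (Set.mem_insert _ _)
lemma g2_mem : (1 - sL) • vV ∈ imD4 :=
  Submodule.subset_span (Set.mem_insert_of_mem _ (Set.mem_insert _ _))
lemma g4_mem : (1 - sL + sL ^ 2) • wV ∈ imD4 :=
  Submodule.subset_span (Set.mem_insert_of_mem _ (Set.mem_insert_of_mem _
    (Set.mem_insert_of_mem _ (Set.mem_insert _ _))))
lemma g5_mem : (1 - sL + sL ^ 2) • (wV - uV) ∈ imD4 :=
  Submodule.subset_span (Set.mem_insert_of_mem _ (Set.mem_insert_of_mem _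
    (Set.mem_insert_of_mem _ (Set.mem_insert_of_mem _ (Set.mem_insert _ _)))))
lemma g6_mem : (1 - sL + sL ^ 2) • (wV - vV) ∈ imD4 :=
  Submodule.subset_span (Set.mem_insert_of_mem _ (Set.mem_insert_of_mem _
    (Set.mem_insert_of_mem _ (Set.mem_insert_of_mem _ (Set.mem_insert_of_mem _ rfl)))))

lemma Tm2_smul (y : Fin 3 → LZ) : (T (-2) : LZ) • ((sL ^ 2) • y) = y := by
  rw [smul_smul]
  have : (T (-2) : LZ) * sL ^ 2 = 1 := by
    rw [sL, T_pow, ← T_add]; norm_num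
  rw [this, one_smul]

lemma uV_mem : uV ∈ imD4 := by
  have h : (sL ^ 2) • uV
      = (1 - sL + sL ^ 2) • wV - (1 - sL + sL ^ 2) • (wV - uV) - (1 - sL) • uV := by
    rw [smul_sub, sub_sub_cancel, ← sub_smul]
    congr 1
    ring
  have := Tm2_smul uV
  rw [h] at this
  rw [← this]
  exact Submodule.smul_mem _ _ (Submodule.sub_mem _ (Submodule.sub_mem _ g4_mem g5_mem) g1_mem)

lemma vV_mem : vV ∈ imD4 := by
  have h : (sL ^ 2) • vV
      = (1 - sL + sL ^ 2) • wV - (1 - sL + sL ^ 2) • (wV - vV) - (1 - sL) • vV := by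
    rw [smul_sub, sub_sub_cancel, ← sub_smul]
    congr 1
    ring
  have := Tm2_smul vV
  rw [h] at this
  rw [← this]
  exact Submodule.smul_mem _ _ (Submodule.sub_mem _ (Submodule.sub_mem _ g4_mem g6_mem) g2_mem)

lemma imD4_eq_ker : imD4 = LinearMap.ker phi3 := by
  apply le_antisymm
  · rw [imD4, Submodule.span_le]
    rintro x (rfl | rfl | rfl | rfl | rfl | rfl) <;>
      · rw [SetLike.mem_coe, mem_ker_phi3]
        simp only [Pi.smul_apply, Pi.sub_apply, uV, vV, wV, smul_eq_mul]
        first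
          | simpa using Ideal.zero_mem JD4
          | simpa using (show 1 - sL + sL ^ 2 ∈ JD4 from Ideal.subset_span (Set.mem_singleton (1 - sL + sL ^ 2)))
  · intro x hx
    rw [mem_ker_phi3] at hx
    obtain ⟨c, hc⟩ := Ideal.mem_span_singleton'.mp hx
    have hx3 : x = x 0 • uV + x 1 • vV + (c * (1 - sL + sL ^ 2)) • wV := by
      funext i
      fin_cases i <;>
        simp [uV, vV, wV, hc, mul_comm]
    rw [hx3]
    refine Submodule.add_mem _ (Submodule.add_mem _
      (Submodule.smul_mem _ _ uV_mem) (Submodule.smul_mem _ _ vV_mem)) ?_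
    rw [← smul_smul]
    exact Submodule.smul_mem _ _ g4_mem

lemma phi3_surj : Function.Surjective phi3 := by
  intro y
  obtain ⟨a, rfl⟩ := Submodule.mkQ_surjective JD4 y
  exact ⟨fun _ => a, rfl⟩

/-! ### The ring `ℤ[s,s⁻¹]/(1-s+s²)` -/

noncomputable def fD4 : Polynomial ℤ := X ^ 2 - X + 1

lemma fD4_monic : fD4.Monic := by
  have h : fD4 = X ^ 2 + (1 - X) := by rw [fD4]; ring
  rw [h]
  refine monic_X_pow_add ?_
  apply lt_of_le_of_lt (degree_sub_le _ _)
  simp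

lemma fD4_natDegree : fD4.natDegree = 2 := by
  rw [fD4]; compute_degree!

noncomputable def rA : AdjoinRoot fD4 := AdjoinRoot.root fD4

lemma rA_rel : rA ^ 2 - rA + 1 = 0 := by
  have h : Polynomial.aeval rA (X ^ 2 - X + 1 : ℤ[X]) = 0 := by
    rw [show (X ^ 2 - X + 1 : ℤ[X]) = fD4 from rfl, rA, AdjoinRoot.aeval_eq, AdjoinRoot.mk_self]
  simpa using h

noncomputable def uRA : (AdjoinRoot fD4)ˣ :=
  ⟨rA, 1 - rA, by linear_combination - rA_rel, by linear_combination - rA_rel⟩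

noncomputable def phiA : LZ →ₐ[ℤ] AdjoinRoot fD4 :=
  AddMonoidAlgebra.lift ℤ (AdjoinRoot fD4) ℤ ((Units.coeHom _).comp (zpowersHom _ uRA))

lemma phiA_T (n : ℤ) : phiA (T n) = ((uRA ^ n : (AdjoinRoot fD4)ˣ) : AdjoinRoot fD4) := by
  rw [LaurentPolynomial.T, phiA, AddMonoidAlgebra.lift_single]
  simp

lemma phiA_s : phiA sL = rA := by
  rw [sL, phiA_T]; simp [uRA]

lemma phiA_surj : Function.Surjective phiA := by
  have h1 : Algebra.adjoin ℤ ({rA} : Set (AdjoinRoot fD4)) ≤ phiA.range :=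
    Algebra.adjoin_le (Set.singleton_subset_iff.mpr ⟨sL, phiA_s⟩)
  have h2 : phiA.range = ⊤ := top_unique (by
    rw [← AdjoinRoot.adjoinRoot_eq_top (f := fD4)]; exact h1)
  rw [← AlgHom.range_eq_top]
  exact h2

lemma phiA_toLaurent (q : ℤ[X]) : phiA (q.toLaurent) = AdjoinRoot.mk fD4 q := by
  have h : phiA.comp toLaurentAlg = Polynomial.aeval rA := by
    apply Polynomial.algHom_ext
    show phiA (toLaurentAlg X) = _
    rw [toLaurentAlg_apply, Polynomial.toLaurent_X, show (T 1 : LZ) = sL from rfl, phiA_s]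
    simp
  have h2 : phiA (toLaurentAlg q) = Polynomial.aeval rA q :=
    DFunLike.congr_fun h q
  rw [toLaurentAlg_apply] at h2
  rw [h2, rA, AdjoinRoot.aeval_eq]

lemma toLaurent_fD4 : fD4.toLaurent = 1 - sL + sL ^ 2 := by
  rw [fD4]
  simp only [map_add, map_sub, map_pow, Polynomial.toLaurent_X, map_one]
  rw [sL]
  ring

lemma ker_phiA : RingHom.ker phiA = Ideal.span {1 - sL + sL ^ 2} := by
  apply le_antisymm
  · intro p hp
    rw [RingHom.mem_ker] at hp
    obtain ⟨n, q, hq⟩ := p.exists_T_pow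
    have hmk : AdjoinRoot.mk fD4 q = 0 := by
      rw [← phiA_toLaurent, hq, map_mul, hp, zero_mul]
    obtain ⟨h, hh⟩ := AdjoinRoot.mk_eq_zero.mp hmk
    have hp2 : p = (1 - sL + sL ^ 2) * (h.toLaurent * T (-n)) := by
      have : p = q.toLaurent * T (-(n : ℤ)) := by
        rw [hq, mul_assoc, ← T_add]
        simp
      rw [this, hh, map_mul, toLaurent_fD4]
      ring
    rw [hp2]
    exact Ideal.mul_mem_right _ _ (Ideal.subset_span rfl)
  · rw [Ideal.span_le, Set.singleton_subset_iff]
    have : phiA (1 - sL + sL ^ 2) = 0 := by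
      simp only [map_add, map_sub, map_pow, map_one, phiA_s]
      linear_combination rA_rel
    simpa [RingHom.mem_ker] using this

noncomputable def eQ : (LZ ⧸ Ideal.span {1 - sL + sL ^ 2}) ≃ₐ[ℤ] AdjoinRoot fD4 :=
  (Ideal.quotientEquivAlgOfEq ℤ ker_phiA.symm).trans
    (Ideal.quotientKerAlgEquivOfSurjective phiA_surj)

noncomputable def pbD4 : PowerBasis ℤ (AdjoinRoot fD4) := AdjoinRoot.powerBasis' fD4_monic

instance : Module.Free ℤ (AdjoinRoot fD4) := Module.Free.of_basis pbD4.basis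

lemma rank_adjoinRoot : Module.rank ℤ (AdjoinRoot fD4) = 2 := by
  rw [rank_eq_card_basis pbD4.basis]
  simp [pbD4, fD4_natDegree]

noncomputable def e1 : ((Fin 3 → LZ) ⧸ imD4) ≃ₗ[LZ] (LZ ⧸ JD4) :=
  (Submodule.quotEquivOfEq imD4 (LinearMap.ker phi3) imD4_eq_ker).trans
    (phi3.quotKerEquivOfSurjective phi3_surj)

noncomputable def EZ : ((Fin 3 → LZ) ⧸ imD4) ≃ₗ[ℤ] AdjoinRoot fD4 :=
  (e1.restrictScalars ℤ).trans eQ.toLinearEquiv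

end Aux

/-- Let `R = ℤ[s,s⁻¹]` and let `u, v, w` be a basis of the free `R`-module `R³`.  The
quotient of `R³` by the submodule generated by `(1−s)u`, `(1−s)v`, `(1−s)(v−u)`,
`(1−s+s²)w`, `(1−s+s²)(w−u)` and `(1−s+s²)(w−v)` is isomorphic to `R/(R·(1−s+s²))`; in
particular its underlying additive group is free abelian of rank 2.  (Type `D₄`.) -/
theorem quotient_D4 :
    Nonempty (((Fin 3 → LZ) ⧸ imD4) ≃ₗ[LZ] (LZ ⧸ Ideal.span {1 - sL + sL ^ 2})) ∧
      Module.Free ℤ ((Fin 3 → LZ) ⧸ imD4) ∧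
      Module.rank ℤ ((Fin 3 → LZ) ⧸ imD4) = 2 := by
  refine ⟨⟨e1⟩, Module.Free.of_equiv EZ.symm, ?_⟩
  rw [EZ.rank_eq, rank_adjoinRoot]
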